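/- Let X be a finite set of simply typed variables, 𝕋 a finite set of simple types, and τ ∈ 𝕋. Let W_τ be the set of words in X·({@} ∪ {λx : x ∈ X})* having type τ under the 𝕋-restricted word-typing rules. Then there exists a deterministic finite automaton over the alphabet X^λ = X ∪ {@} ∪ {λx : x ∈ X}, with a finite set of states, that recognizes exactly W_τ and is counter-free: for every state q, every word w, and every integer k ≥ 1, if reading w^k (w repeated k times) from q leads back to q, then reading w once from q already leads back to q. -/

import Mathlib

/-- Simple types: τ ::= o | τ → τ. -/
inductive Ty : Type
  | o : Ty
  | arrow : Ty → Ty → Ty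
deriving DecidableEq


/-- The alphabet `X^λ = X ∪ {@} ∪ {λx : x ∈ X}`. -/
inductive Letter (V : Type) : Type
  | var : V → Letter V
  | lam : V → Letter V
  | app : Letter V

/-- The `𝕋`-restricted word-typing rules on nonempty words over `X^λ`:
the one-letter word `x` has the type of `x` provided it is in `𝕋`;
if `u : τ` then `u·λx : σ → τ` where `σ` is the type of `x` and `σ, τ ∈ 𝕋`;
if `u : σ → τ` with `σ, τ ∈ 𝕋` then `u·@ : τ`. -/
inductive WTyT {V : Type} (tyOf : V → Ty) (T : Set Ty) : List (Letter V) → Ty → Prop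
  | var (x : V) : tyOf x ∈ T → WTyT tyOf T [Letter.var x] (tyOf x)
  | lam {u : List (Letter V)} {τ : Ty} (x : V) :
      tyOf x ∈ T → τ ∈ T → WTyT tyOf T u τ →
      WTyT tyOf T (u ++ [Letter.lam x]) (Ty.arrow (tyOf x) τ)
  | app {u : List (Letter V)} {σ τ : Ty} :
      σ ∈ T → τ ∈ T → WTyT tyOf T u (Ty.arrow σ τ) →
      WTyT tyOf T (u ++ [Letter.app]) τ

namespace CF

/-- Spine of a simple type as a list of argument types. -/
def toList : Ty → List Ty
  | Ty.o => []
  | Ty.arrow a b => a :: toList b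

theorem toList_inj : ∀ t t' : Ty, toList t = toList t' → t = t' := by
  intro t
  induction t with
  | o => intro t' h; cases t' <;> simp [toList] at h ⊢
  | arrow a b iha ihb =>
      intro t' h; cases t' with
      | o => simp [toList] at h
      | arrow a' b' =>
          simp only [toList, List.cons.injEq] at h
          rw [h.1, ihb _ h.2]

variable {V : Type} (tyOf : V → Ty) (T : Set Ty)

/-- States: `none` = dead, `some none` = start, `some (some t)` = prefix of type `t`. -/
abbrev St := Option (Option Ty)

open Classical in
/-- The transition function. -/
noncomputable def stp : St → Letter V → St
  | some none, Letter.var x => if tyOf x ∈ T then some (some (tyOf x)) else none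
  | some (some t), Letter.lam x =>
      if tyOf x ∈ T ∧ t ∈ T then some (some (Ty.arrow (tyOf x) t)) else none
  | some (some (Ty.arrow σ t)), Letter.app =>
      if σ ∈ T ∧ t ∈ T then some (some t) else none
  | _, _ => none

noncomputable def run (q : St) (w : List (Letter V)) : St :=
  w.foldl (stp tyOf T) q

@[simp] theorem run_nil (q : St) : run tyOf T q [] = q := rfl

@[simp] theorem run_cons (q : St) (a : Letter V) (w : List (Letter V)) :
    run tyOf T q (a :: w) = run tyOf T (stp tyOf T q a) w := rfl

theorem run_append (q : St) (u v : List (Letter V)) :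
    run tyOf T q (u ++ v) = run tyOf T (run tyOf T q u) v :=
  List.foldl_append

@[simp] theorem stp_dead (a : Letter V) : stp tyOf T none a = none := by
  cases a <;> rfl

@[simp] theorem run_dead (w : List (Letter V)) : run tyOf T none w = none := by
  induction w with
  | nil => rfl
  | cons a w ih => simpa using ih

theorem stp_ne_start (q : St) (a : Letter V) : stp tyOf T q a ≠ some none := by
  cases q with
  | none => simp
  | some q =>
      cases q with
      | none => cases a <;> simp [stp] <;> split <;> simp
      | some t => cases a <;> cases t <;> simp [stp] <;> split <;> simp

theorem run_ne_start (w : List (Letter V)) :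
    ∀ q : St, q ≠ some none → run tyOf T q w ≠ some none := by
  induction w with
  | nil => intro q hq; simpa using hq
  | cons a w ih => intro q hq; simpa using ih _ (stp_ne_start tyOf T q a)

theorem run_start_eq_start (w : List (Letter V))
    (h : run tyOf T (some none) w = some none) : w = [] := by
  cases w with
  | nil => rfl
  | cons a w =>
      exact absurd (by simpa using h) (run_ne_start tyOf T w _ (stp_ne_start tyOf T _ a))

/-- If a run from a live state ends live, any intermediate state is live. -/
theorem run_split (u v : List (Letter V)) (s t' : Ty)
    (h : run tyOf T (some (some s)) (u ++ v) = some (some t')) :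
    ∃ s₁ : Ty, run tyOf T (some (some s)) u = some (some s₁) ∧
      run tyOf T (some (some s₁)) v = some (some t') := by
  rw [run_append] at h
  rcases hq : run tyOf T (some (some s)) u with _ | (_ | s₁)
  · rw [hq] at h; simp at h
  · exact absurd hq (run_ne_start tyOf T u _ (by simp))
  · exact ⟨s₁, rfl, by rwa [hq] at h⟩

theorem wty_ne_nil {w : List (Letter V)} {t : Ty} (h : WTyT tyOf T w t) : w ≠ [] := by
  induction h <;> simp

theorem run_of_wty {w : List (Letter V)} {t : Ty} (h : WTyT tyOf T w t) :
    run tyOf T (some none) w = some (some t) := by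
  classical
  induction h with
  | var x hx => simp [stp, hx]
  | lam x h1 h2 h3 ih => simp [run_append, ih, stp, h1, h2]
  | app h1 h2 h3 ih => simp [run_append, ih, stp, h1, h2]

/-- Correctness of the automaton. -/
theorem run_correct (w : List (Letter V)) :
    ∀ t : Ty, run tyOf T (some none) w = some (some t) ↔ WTyT tyOf T w t := by
  classical
  induction w using List.reverseRecOn with
  | nil =>
      intro t
      constructor
      · intro h; simp at h
      · intro h; exact absurd rfl (wty_ne_nil tyOf T h)
  | append_singleton w a ih =>
      intro t
      constructor
      · intro h
        rw [run_append] at h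
        rcases hq : run tyOf T (some none) w with _ | (_ | s)
        · rw [hq] at h; simp at h
        · have hw : w = [] := run_start_eq_start tyOf T w hq
          subst hw
          cases a with
          | var x =>
              simp only [run_nil, run_cons, hq] at h
              simp only [stp] at h
              split at h
              · simp at h
                exact h ▸ WTyT.var x (by assumption)
              · simp at h
          | lam x => simp [stp] at h
          | app => simp [stp] at h
        · rw [hq] at h
          have hs : WTyT tyOf T w s := (ih s).1 hq
          cases a with
          | var x => simp [stp] at h
          | lam x =>
              simp only [run_nil, run_cons, stp] at h
              split at h
              · simp at h
                rename_i hc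
                exact h ▸ WTyT.lam x hc.1 hc.2 hs
              · simp at h
          | app =>
              cases s with
              | o => simp [stp] at h
              | arrow σ u =>
                  simp only [run_nil, run_cons, stp] at h
                  split at h
                  · simp at h
                    rename_i hc
                    exact h ▸ WTyT.app hc.1 hc.2 hs
                  · simp at h
      · exact run_of_wty tyOf T

/-- Net effect of a word on the spine of the current type: number of initial
arguments consumed, and list of arguments pushed on top. -/
def eff : List (Letter V) → ℕ × List Ty
  | [] => (0, [])
  | Letter.var _ :: _ => (0, [])
  | Letter.lam x :: w =>
      if (eff w).1 = 0 then (0, (eff w).2 ++ [tyOf x]) else ((eff w).1 - 1, (eff w).2)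
  | Letter.app :: w => ((eff w).1 + 1, (eff w).2)

theorem key (w : List (Letter V)) :
    ∀ t t' : Ty, run tyOf T (some (some t)) w = some (some t') →
      toList t' = (eff tyOf w).2 ++ (toList t).drop (eff tyOf w).1 ∧
        (eff tyOf w).1 ≤ (toList t).length := by
  classical
  induction w with
  | nil =>
      intro t t' h
      simp at h
      subst h
      simp [eff]
  | cons a w ih =>
      intro t t' h
      cases a with
      | var x => simp [stp] at h
      | lam x =>
          simp only [run_cons, stp] at h
          split at h
          · have := ih (Ty.arrow (tyOf x) t) t' h
            rcases this with ⟨h1, h2⟩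
            simp only [toList] at h1 h2
            rcases hm : (eff tyOf w).1 with _ | m
            · rw [hm] at h1
              constructor
              · simp [eff, hm, h1]
              · simp [eff, hm]
            · rw [hm] at h1 h2
              constructor
              · simpa [eff, hm] using h1
              · simp only [eff, hm]
                simp at h2 ⊢
                omega
          · simp at h
      | app =>
          cases t with
          | o => simp [stp] at h
          | arrow σ u =>
              simp only [run_cons, stp] at h
              split at h
              · have := ih u t' h
                rcases this with ⟨h1, h2⟩
                refine ⟨?_, ?_⟩
                · simpa [eff, toList] using h1
                · simp [eff, toList]
                  omega
              · simp at h

theorem key_len (w : List (Letter V)) (t t' : Ty)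
    (h : run tyOf T (some (some t)) w = some (some t')) :
    (toList t').length + (eff tyOf w).1 = (eff tyOf w).2.length + (toList t).length := by
  obtain ⟨h1, h2⟩ := key tyOf T w t t' h
  have := congrArg List.length h1
  simp [List.length_drop] at this
  omega

theorem chain_len (w : List (Letter V)) :
    ∀ (k : ℕ) (t t' : Ty),
      run tyOf T (some (some t)) (List.replicate k w).flatten = some (some t') →
      (toList t').length + k * (eff tyOf w).1 =
        k * (eff tyOf w).2.length + (toList t).length := by
  intro k
  induction k with
  | zero => intro t t' h; simp at h; subst h; simp
  | succ k ih =>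
      intro t t' h
      rw [List.replicate_succ, List.flatten_cons] at h
      obtain ⟨s₁, hs1, hs2⟩ := run_split tyOf T w _ t t' h
      have e1 := key_len tyOf T w t s₁ hs1
      have e2 := ih s₁ t' hs2
      have : (k+1) * (eff tyOf w).1 = k * (eff tyOf w).1 + (eff tyOf w).1 := by ring
      rw [this]
      have : (k+1) * (eff tyOf w).2.length = k * (eff tyOf w).2.length + (eff tyOf w).2.length := by ring
      rw [this]
      omega

theorem run_loop (w : List (Letter V)) (q : St) (h : run tyOf T q w = q) :
    ∀ k : ℕ, run tyOf T q (List.replicate k w).flatten = q := by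
  intro k
  induction k with
  | zero => simp
  | succ k ih => rw [List.replicate_succ, List.flatten_cons, run_append, h, ih]

/-- The automaton is counter-free. -/
theorem counter_free (q : St) (w : List (Letter V)) (k : ℕ) (hk : 1 ≤ k)
    (h : run tyOf T q (List.replicate k w).flatten = q) :
    run tyOf T q w = q := by
  rcases q with _ | (_ | t)
  · simp
  · -- start state: w must be empty
    rcases w with _ | ⟨a, w⟩
    · simp
    · exfalso
      have := run_start_eq_start tyOf T _ h
      have hne : (List.replicate k (a :: w)).flatten ≠ [] := by
        rcases k with _ | k
        · omega
        · simp [List.replicate_succ]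
      exact hne this
  · -- live state
    -- decompose the first round
    obtain ⟨k', rfl⟩ : ∃ k', k = k' + 1 := ⟨k - 1, by omega⟩
    rw [List.replicate_succ, List.flatten_cons] at h
    obtain ⟨t₁, ht1, ht1'⟩ := run_split tyOf T w _ t t h
    -- lengths give m = |pre|
    have hlen : (toList t).length + (k' + 1) * (eff tyOf w).1 =
        (k' + 1) * (eff tyOf w).2.length + (toList t).length := by
      have := chain_len tyOf T w (k' + 1) t t (by
        rw [List.replicate_succ, List.flatten_cons, run_append, ht1]; exact ht1')
      exact this
    have hmp : (eff tyOf w).1 = (eff tyOf w).2.length := by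
      have h' : (k' + 1) * (eff tyOf w).1 = (k' + 1) * (eff tyOf w).2.length := by omega
      exact Nat.eq_of_mul_eq_mul_left (by omega) h'
    obtain ⟨hk1, -⟩ := key tyOf T w t t₁ ht1
    rcases k' with _ | k''
    · -- k = 1 : t₁ = t directly
      simp at ht1'
      rw [ht1'] at ht1
      exact ht1
    · -- k ≥ 2 : w fixes t₁, hence t = t₁
      rw [List.replicate_succ, List.flatten_cons] at ht1'
      obtain ⟨t₂, ht2, -⟩ := run_split tyOf T w _ t₁ t ht1'
      obtain ⟨hk2, -⟩ := key tyOf T w t₁ t₂ ht2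
      have ht21 : t₂ = t₁ := by
        apply toList_inj
        rw [hk2, hk1, hmp, List.drop_left]
      rw [ht21] at ht2
      have hfix := run_loop tyOf T w _ ht2 (k'' + 1)
      rw [List.replicate_succ, List.flatten_cons] at hfix
      rw [ht1'] at hfix
      simp only [Option.some.injEq] at hfix
      rw [← hfix] at ht1
      exact ht1

theorem stp_mem (q : St) (a : Letter V) :
    stp tyOf T q a ∈ ({none, some none} ∪
      (fun t => some (some t)) '' (T ∪ Set.image2 Ty.arrow T T) : Set St) := by
  classical
  rcases q with _ | (_ | t)
  · simp
  · cases a with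
    | var x =>
        simp only [stp]
        split
        · rename_i hx
          exact Or.inr ⟨tyOf x, Or.inl hx, rfl⟩
        · simp
    | lam x => simp [stp]
    | app => simp [stp]
  · cases a with
    | var x => simp [stp]
    | lam x =>
        simp only [stp]
        split
        · rename_i hx
          exact Or.inr ⟨_, Or.inr (Set.mem_image2_of_mem hx.1 hx.2), rfl⟩
        · simp
    | app =>
        cases t with
        | o => simp [stp]
        | arrow σ u =>
            simp only [stp]
            split
            · rename_i hx
              exact Or.inr ⟨u, Or.inl hx.2, rfl⟩
            · simp

end CF

/-- For a finite set `X` of typed variables, a finite set `𝕋` of simple types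
and `τ ∈ 𝕋`, there is a deterministic finite automaton (finitely many states)
over the alphabet `X^λ` recognizing exactly the words of type `τ` under the
`𝕋`-restricted word-typing rules, and this automaton is counter-free:
if reading `w^k` (`k ≥ 1`) from a state `q` leads back to `q`, then reading
`w` once from `q` already leads back to `q`. -/
theorem counter_free_DFA_for_word_types {V : Type} [Fintype V] (tyOf : V → Ty)
    (T : Set Ty) (hT : T.Finite) (τ : Ty) (hτ : τ ∈ T) :
    ∃ (Q : Type) (_ : Fintype Q) (A : DFA (Letter V) Q),
      (∀ w : List (Letter V), w ∈ A.accepts ↔ WTyT tyOf T w τ) ∧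
      (∀ (q : Q) (w : List (Letter V)) (k : ℕ), 1 ≤ k →
        A.evalFrom q ((List.replicate k w).flatten) = q →
        A.evalFrom q w = q) := by
  classical
  set Sq : Set CF.St := {none, some none} ∪
      (fun t => some (some t)) '' (T ∪ Set.image2 Ty.arrow T T) with hSq
  have hSqfin : Sq.Finite := by
    apply Set.Finite.union
    · exact (Set.finite_singleton _).insert _
    · exact (hT.union (hT.image2 _ hT)).image _
  set A : DFA (Letter V) ↥Sq :=
    { step := fun q a => ⟨CF.stp tyOf T q.1 a, CF.stp_mem tyOf T q.1 a⟩,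
      start := ⟨some none, Or.inl (Or.inr rfl)⟩,
      accept := {q | q.1 = some (some τ)} } with hA
  have proj : ∀ (w : List (Letter V)) (q : ↥Sq),
      (A.evalFrom q w).1 = CF.run tyOf T q.1 w := by
    intro w
    induction w with
    | nil => intro q; rfl
    | cons a w ih => intro q; exact ih _
  refine ⟨↥Sq, hSqfin.fintype, A, ?_, ?_⟩
  case _ =>
    intro w
    rw [DFA.mem_accepts]
    constructor
    · intro h
      have h1 : (A.evalFrom A.start w).1 = some (some τ) := h
      rw [proj w _] at h1
      exact (CF.run_correct tyOf T w τ).1 h1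
    · intro h
      have h2 := CF.run_of_wty tyOf T h
      show (A.evalFrom A.start w).1 = some (some τ)
      rw [proj w _]
      exact h2
  case _ =>
    intro q w k hk h
    have h1 : CF.run tyOf T q.1 (List.replicate k w).flatten = q.1 := by
      rw [← proj]; exact congrArg Subtype.val h
    have h2 := CF.counter_free tyOf T q.1 w k hk h1
    apply Subtype.ext
    rw [proj]; exact h2
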